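/- If A and B are 2n×2n real matrices admitting symplectic dilations of orders 2(n+ℓ) and 2(n+m) respectively, then the product AB admits a symplectic dilation of order 2(n+ℓ+m). -/

import Mathlib

open Matrix

/-- The 2x2 matrix J₂ = [[0,-1],[1,0]]. -/
def J2 : Matrix (Fin 2) (Fin 2) ℝ := !![0, -1; 1, 0]

/-- The 2n x 2n block-diagonal matrix with n diagonal blocks J₂. -/
def J (n : ℕ) : Matrix (Fin (2*n)) (Fin (2*n)) ℝ :=
  Matrix.of fun i j =>
    if i.val = j.val + 1 ∧ j.val % 2 = 0 then 1
    else if j.val = i.val + 1 ∧ i.val % 2 = 0 then -1 else 0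
/-- If A and B admit symplectic dilations of orders 2(n+l) and 2(n+m), then AB admits
a symplectic dilation of order 2(n+l+m). -/
theorem product_symplectic_dilation {n l m : ℕ}
    (A B : Matrix (Fin (2*n)) (Fin (2*n)) ℝ)
    (hA : ∃ (P : Matrix (Fin (2*n)) (Fin (2*l)) ℝ)
          (Q : Matrix (Fin (2*l)) (Fin (2*n)) ℝ)
          (R : Matrix (Fin (2*l)) (Fin (2*l)) ℝ),
        (Matrix.fromBlocks A P Q R)ᵀ * Matrix.fromBlocks (J n) 0 0 (J l) *
          Matrix.fromBlocks A P Q R = Matrix.fromBlocks (J n) 0 0 (J l))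
    (hB : ∃ (P : Matrix (Fin (2*n)) (Fin (2*m)) ℝ)
          (Q : Matrix (Fin (2*m)) (Fin (2*n)) ℝ)
          (R : Matrix (Fin (2*m)) (Fin (2*m)) ℝ),
        (Matrix.fromBlocks B P Q R)ᵀ * Matrix.fromBlocks (J n) 0 0 (J m) *
          Matrix.fromBlocks B P Q R = Matrix.fromBlocks (J n) 0 0 (J m)) :
    ∃ (P : Matrix (Fin (2*n)) (Fin (2*l) ⊕ Fin (2*m)) ℝ)
      (Q : Matrix (Fin (2*l) ⊕ Fin (2*m)) (Fin (2*n)) ℝ)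
      (R : Matrix (Fin (2*l) ⊕ Fin (2*m)) (Fin (2*l) ⊕ Fin (2*m)) ℝ),
        (Matrix.fromBlocks (A * B) P Q R)ᵀ *
          Matrix.fromBlocks (J n) 0 0 (Matrix.fromBlocks (J l) 0 0 (J m)) *
          Matrix.fromBlocks (A * B) P Q R =
        Matrix.fromBlocks (J n) 0 0 (Matrix.fromBlocks (J l) 0 0 (J m)) := by
  obtain ⟨Pa, Qa, Ra, ha⟩ := hA
  obtain ⟨Pb, Qb, Rb, hb⟩ := hB
  set K : Matrix (Fin (2*n) ⊕ (Fin (2*l) ⊕ Fin (2*m)))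
      (Fin (2*n) ⊕ (Fin (2*l) ⊕ Fin (2*m))) ℝ :=
    Matrix.fromBlocks (J n) 0 0 (Matrix.fromBlocks (J l) 0 0 (J m)) with hK
  set L1 : Matrix (Fin (2*n) ⊕ (Fin (2*l) ⊕ Fin (2*m)))
      (Fin (2*n) ⊕ (Fin (2*l) ⊕ Fin (2*m))) ℝ :=
    Matrix.fromBlocks A (fromCols Pa 0) (fromRows Qa 0)
      (Matrix.fromBlocks Ra 0 0 1) with hL1
  set L2 : Matrix (Fin (2*n) ⊕ (Fin (2*l) ⊕ Fin (2*m)))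
      (Fin (2*n) ⊕ (Fin (2*l) ⊕ Fin (2*m))) ℝ :=
    Matrix.fromBlocks B (fromCols 0 Pb) (fromRows 0 Qb)
      (Matrix.fromBlocks 1 0 0 Rb) with hL2
  -- block equations from ha
  have ha11 := congrArg Matrix.toBlocks₁₁ ha
  have ha12 := congrArg Matrix.toBlocks₁₂ ha
  have ha21 := congrArg Matrix.toBlocks₂₁ ha
  have ha22 := congrArg Matrix.toBlocks₂₂ ha
  simp only [Matrix.fromBlocks_transpose, Matrix.fromBlocks_multiply,
    Matrix.toBlocks_fromBlocks₁₁, Matrix.toBlocks_fromBlocks₁₂,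
    Matrix.toBlocks_fromBlocks₂₁, Matrix.toBlocks_fromBlocks₂₂,
    Matrix.mul_zero, Matrix.zero_mul, add_zero, zero_add] at ha11 ha12 ha21 ha22
  have hb11 := congrArg Matrix.toBlocks₁₁ hb
  have hb12 := congrArg Matrix.toBlocks₁₂ hb
  have hb21 := congrArg Matrix.toBlocks₂₁ hb
  have hb22 := congrArg Matrix.toBlocks₂₂ hb
  simp only [Matrix.fromBlocks_transpose, Matrix.fromBlocks_multiply,
    Matrix.toBlocks_fromBlocks₁₁, Matrix.toBlocks_fromBlocks₁₂,
    Matrix.toBlocks_fromBlocks₂₁, Matrix.toBlocks_fromBlocks₂₂,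
    Matrix.mul_zero, Matrix.zero_mul, add_zero, zero_add] at hb11 hb12 hb21 hb22
  have h1 : L1ᵀ * K * L1 = K := by
    rw [hL1, hK]
    ext i j
    simp only [Matrix.fromBlocks_transpose, Matrix.transpose_fromCols,
      Matrix.transpose_fromRows, Matrix.transpose_zero, Matrix.transpose_one,
      Matrix.fromBlocks_multiply, Matrix.mul_fromCols, Matrix.fromRows_mul,
      Matrix.fromCols_mul_fromRows, Matrix.fromRows_mul_fromCols,
      Matrix.fromCols_mul_fromBlocks, Matrix.fromBlocks_mul_fromRows,
      Matrix.mul_zero, Matrix.zero_mul, add_zero, zero_add, Matrix.mul_one,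
      Matrix.one_mul]
    cases i with
    | inl i =>
      cases j with
      | inl j => simp [ha11]
      | inr j =>
        cases j with
        | inl j => simpa using congrFun (congrFun ha12 i) j
        | inr j => simp [Matrix.fromCols]
    | inr i =>
      cases i with
      | inl i =>
        cases j with
        | inl j => simpa using congrFun (congrFun ha21 i) j
        | inr j =>
          cases j with
          | inl j =>
            simp [Matrix.fromBlocks_multiply, Matrix.fromRows_apply_inl, Matrix.fromRows_apply_inr, Matrix.fromCols,
              ← Matrix.ext_iff.2 ha22 i j]
          | inr j => simp [Matrix.fromBlocks_multiply, Matrix.fromRows, Matrix.fromCols]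
      | inr i =>
        cases j with
        | inl j => simp [Matrix.fromRows_apply_inl, Matrix.fromRows_apply_inr]
        | inr j =>
          cases j with
          | inl j => simp [Matrix.fromBlocks_multiply, Matrix.fromRows_apply_inl, Matrix.fromRows_apply_inr, Matrix.fromCols]
          | inr j => simp [Matrix.fromBlocks_multiply, Matrix.fromRows, Matrix.fromCols]
  have h2 : L2ᵀ * K * L2 = K := by
    rw [hL2, hK]
    ext i j
    simp only [Matrix.fromBlocks_transpose, Matrix.transpose_fromCols,
      Matrix.transpose_fromRows, Matrix.transpose_zero, Matrix.transpose_one,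
      Matrix.fromBlocks_multiply, Matrix.mul_fromCols, Matrix.fromRows_mul,
      Matrix.fromCols_mul_fromRows, Matrix.fromRows_mul_fromCols,
      Matrix.fromCols_mul_fromBlocks, Matrix.fromBlocks_mul_fromRows,
      Matrix.mul_zero, Matrix.zero_mul, add_zero, zero_add, Matrix.mul_one,
      Matrix.one_mul]
    cases i with
    | inl i =>
      cases j with
      | inl j => simp [hb11]
      | inr j =>
        cases j with
        | inl j => simp [Matrix.fromCols]
        | inr j => simpa using congrFun (congrFun hb12 i) j
    | inr i =>
      cases i with
      | inl i =>
        cases j with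
        | inl j => simp [Matrix.fromRows_apply_inl, Matrix.fromRows_apply_inr]
        | inr j =>
          cases j with
          | inl j => simp [Matrix.fromBlocks_multiply, Matrix.fromRows, Matrix.fromCols]
          | inr j => simp [Matrix.fromBlocks_multiply, Matrix.fromRows_apply_inl, Matrix.fromRows_apply_inr, Matrix.fromCols]
      | inr i =>
        cases j with
        | inl j => simpa using congrFun (congrFun hb21 i) j
        | inr j =>
          cases j with
          | inl j => simp [Matrix.fromBlocks_multiply, Matrix.fromRows, Matrix.fromCols]
          | inr j =>
            simp [Matrix.fromBlocks_multiply, Matrix.fromRows_apply_inl, Matrix.fromRows_apply_inr, Matrix.fromCols,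
              ← Matrix.ext_iff.2 hb22 i j]
  refine ⟨(L1 * L2).toBlocks₁₂, (L1 * L2).toBlocks₂₁, (L1 * L2).toBlocks₂₂, ?_⟩
  have hAB : Matrix.fromBlocks (A * B) ((L1 * L2).toBlocks₁₂) ((L1 * L2).toBlocks₂₁)
      ((L1 * L2).toBlocks₂₂) = L1 * L2 := by
    have h11 : (L1 * L2).toBlocks₁₁ = A * B := by
      rw [hL1, hL2, Matrix.fromBlocks_multiply]
      simp [Matrix.fromCols_mul_fromRows]
    rw [← h11, Matrix.fromBlocks_toBlocks]
  rw [hAB, Matrix.transpose_mul, Matrix.mul_assoc, Matrix.mul_assoc,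
    ← Matrix.mul_assoc K, ← Matrix.mul_assoc L1ᵀ, ← Matrix.mul_assoc L1ᵀ, h1,
    ← Matrix.mul_assoc, h2]
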